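/- A matroid M is weakly round if there is no pair of sets A, B with A ∪ B = E(M), r_M(A) ≤ r(M) − 1 and r_M(B) ≤ r(M) − 2. Prove: if M is weakly round and e ∈ E(M) is a nonloop, then M/e is weakly round. -/

import Mathlib

open Set Matroid
open scoped Matroid

namespace MatroidDHJ

variable {α β : Type*}

/-- The rank of a set in a matroid, as an extended natural number. -/
noncomputable def er (M : Matroid α) (X : Set α) : ℕ∞ :=
  ⨆ I : {I : Set α // M.Indep I ∧ I ⊆ X}, (I : Set α).encard

/-- The rank of a set, as a natural number. -/
noncomputable def r (M : Matroid α) (X : Set α) : ℕ := (er M X).toNat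

/-- The rank of a matroid. -/
noncomputable def rk (M : Matroid α) : ℕ := r M M.E

/-- Deletion of a set from a matroid. -/
def delete (M : Matroid α) (D : Set α) : Matroid α := M ↾ (M.E \ D)

/-- Contraction of a set in a matroid. -/
def contract (M : Matroid α) (C : Set α) : Matroid α := (delete M✶ C)✶

/-- `N` is a minor of `M` if it is obtained by a contraction followed by a deletion. -/
def IsMinor (N M : Matroid α) : Prop := ∃ C D, delete (contract M C) D = N

/-- A matroid is simple if every set of at most two elements of the ground set
is independent. -/
def Simple (M : Matroid α) : Prop := ∀ I ⊆ M.E, I.encard ≤ 2 → M.Indep I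

/-- `M` has a `U_{2,n}`-minor iff it has a minor that is a simple rank-2 matroid
on `n` elements. -/
def HasU2Minor (M : Matroid α) (n : ℕ) : Prop :=
  ∃ N, IsMinor N M ∧ Simple N ∧ er N N.E = 2 ∧ N.E.encard = n

/-- A point of a matroid is a rank-one flat. -/
def Point (M : Matroid α) (P : Set α) : Prop := M.IsFlat P ∧ er M P = 1

/-- `ε M` is the number of points of `M`. -/
noncomputable def eps (M : Matroid α) : ℕ := {P | Point M P}.ncard

/-- A representation of a matroid over a field `F`: an assignment of vectors to
the elements so that independence coincides with linear independence. -/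
def Rep (M : Matroid α) (F : Type) [Field F] : Prop :=
  ∃ (n : ℕ) (φ : α → (Fin n → F)),
    ∀ I ⊆ M.E, (M.Indep I ↔ LinearIndependent F fun x : I => φ x)

/-- Representability over the field with `q` elements (`q` a prime power). -/
def RepGF (M : Matroid α) (q : ℕ) : Prop :=
  ∃ (F : Type) (hF : Field F) (hfin : Fintype F),
    @Fintype.card F hfin = q ∧ @Rep _ M F hF

/-- `M` is (isomorphic to) the projective geometry `PG(n-1,q)`: a simple
`GF(q)`-representable matroid of rank `n` with `(q^n - 1)/(q - 1)` elements. -/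
def IsPG (M : Matroid α) (n q : ℕ) : Prop :=
  Simple M ∧ RepGF M q ∧ M.E.Finite ∧ rk M = n ∧ (q - 1) * M.E.ncard = q ^ n - 1

/-- A hyperplane of a matroid: a flat whose rank is one less than that of `M`. -/
def Hyperplane (M : Matroid α) (H : Set α) : Prop := M.IsFlat H ∧ r M H + 1 = rk M

/-- An isomorphism between matroids on different ground types. -/
def IsIsoTo (M : Matroid α) (N : Matroid β) : Prop :=
  ∃ e : M.E ≃ N.E, ∀ I : Set M.E,
    M.Indep ((↑) '' I) ↔ N.Indep ((↑) '' (e '' I))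

/-- `M` is (isomorphic to) the affine geometry `AG(n-1,q)`: the deletion of a
hyperplane from `PG(n-1,q)`. -/
def IsAG (M : Matroid α) (n q : ℕ) : Prop :=
  ∃ (P : Matroid ℕ) (H : Set ℕ), IsPG P n q ∧ Hyperplane P H ∧
    IsIsoTo (delete P H) M

/-- `F` is a witnessing family for `S` being a `(q,h,t)`-stack. -/
def StackWitness (S : Matroid α) (q h t : ℕ) (F : Fin h → Set α) : Prop :=
  (∀ i, F i ⊆ S.E) ∧ Pairwise (Function.onFun Disjoint F) ∧
    S.E ⊆ S.closure (⋃ i, F i) ∧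
    ∀ i : Fin h,
      er (contract S (⋃ j ∈ {j | j < i}, F j) ↾ F i) (F i) ≤ t ∧
      ¬ RepGF (contract S (⋃ j ∈ {j | j < i}, F j) ↾ F i) q

/-- `S` is a `(q,h,t)`-stack. -/
def IsStack (S : Matroid α) (q h t : ℕ) : Prop := ∃ F, StackWitness S q h t F

/-- A matroid is weakly round if no two sets of ranks at most `r(M)-1` and
`r(M)-2` respectively have union the ground set. -/
def WeaklyRound (M : Matroid α) : Prop :=
  ¬ ∃ A B : Set α, A ∪ B = M.E ∧ r M A + 1 ≤ rk M ∧ r M B + 2 ≤ rk M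


/-- `N` is a simplification of `M`: a restriction of `M` to a set of nonloops
containing exactly one element of each point of `M`. -/
def IsSimplification (N M : Matroid α) : Prop :=
  ∃ S ⊆ M.E, N = M ↾ S ∧ (∀ e ∈ S, er M {e} = 1) ∧
    ∀ P, Point M P → ∃! e, e ∈ S ∩ P

end MatroidDHJ

open MatroidDHJ
open scoped Matroid

namespace MatroidDHJ

variable {α : Type*} {M : Matroid α} {e : α} {I X B : Set α}

lemma er_eq_of_basis' (hI : M.IsBasis' I X) : er M X = I.encard := by
  unfold er
  refine le_antisymm (iSup_le ?_) ?_
  · rintro ⟨J, hJ, hJX⟩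
    obtain ⟨J', hJ', hJJ'⟩ := hJ.subset_isBasis'_of_subset hJX
    exact (encard_le_encard hJJ').trans (hJ'.encard_eq_encard hI).le
  · exact le_iSup (fun I : {I : Set α // M.Indep I ∧ I ⊆ X} => (I : Set α).encard)
      ⟨I, hI.indep, hI.subset⟩

@[simp] lemma contract_ground (M : Matroid α) (C : Set α) :
    (contract M C).E = M.E \ C := rfl

lemma contract_base_iff (he : e ∈ M.E) (hne : M.Indep {e}) :
    (contract M {e}).IsBase B ↔ M.IsBase (insert e B) ∧ e ∉ B := by
  set R : Set α := M.E \ {e} with hR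
  have hRE : R ⊆ M.E := diff_subset
  have hcb : ∀ D : Set α, D ⊆ R → (M✶.IsBasis' D R ↔ M✶.IsBase D) := by
    intro D hD
    constructor
    · intro hDb
      obtain ⟨B₀, hB₀, heB₀⟩ := hne.exists_isBase_superset
      have hB₀d : M✶.IsBase (M.E \ B₀) := by
        rw [Matroid.dual_isBase_iff diff_subset,
          diff_diff_cancel_left hB₀.subset_ground]
        exact hB₀
      have hB₀R : M.E \ B₀ ⊆ R := by
        intro x hx
        exact ⟨hx.1, fun hxe => hx.2 (by rw [hxe]; exact heB₀ rfl)⟩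
      exact ((Matroid.isBasis'_iff_isBasis (show R ⊆ M✶.E from hRE)).mp
        hDb).isBase_of_isBase_subset hB₀d hB₀R
    · intro hDb
      obtain ⟨J, hJ, hDJ⟩ := hDb.indep.subset_isBasis'_of_subset hD
      rwa [hDb.eq_of_subset_indep hJ.indep hDJ]
  have hrest : ∀ D : Set α, ((M✶ ↾ R).IsBase D ↔ M✶.IsBasis' D R) := by
    intro D; exact Matroid.isBase_restrict_iff'
  have hgr : (delete M✶ {e}) = M✶ ↾ R := rfl
  rw [contract, hgr, Matroid.dual_isBase_iff']
  simp only [Matroid.restrict_ground_eq]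
  constructor
  · rintro ⟨hbase, hBR⟩
    have heB : e ∉ B := fun h => (hBR h).2 rfl
    rw [hrest, hcb _ diff_subset, Matroid.dual_isBase_iff (show R \ B ⊆ M.E from diff_subset.trans hRE)] at hbase
    have : M.E \ (R \ B) = insert e B := by
      ext x
      simp only [hR, mem_diff, mem_singleton_iff, mem_insert_iff, not_and, not_not]
      constructor
      · rintro ⟨hx, h2⟩
        by_cases hxe : x = e
        · exact Or.inl hxe
        · exact Or.inr (h2 ⟨hx, hxe⟩)
      · rintro (rfl | hxB)
        · exact ⟨he, fun h => absurd rfl h.2⟩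
        · exact ⟨(hBR hxB).1, fun _ => hxB⟩
    rw [this] at hbase
    exact ⟨hbase, heB⟩
  · rintro ⟨hbase, heB⟩
    have hBR : B ⊆ R := fun x hx =>
      ⟨hbase.subset_ground (Or.inr hx), fun hxe => heB (by rwa [← hxe])⟩
    refine ⟨?_, hBR⟩
    rw [hrest, hcb _ diff_subset, Matroid.dual_isBase_iff (show R \ B ⊆ M.E from diff_subset.trans hRE)]
    have : M.E \ (R \ B) = insert e B := by
      ext x
      simp only [hR, mem_diff, mem_singleton_iff, mem_insert_iff, not_and, not_not]
      constructor
      · rintro ⟨hx, h2⟩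
        by_cases hxe : x = e
        · exact Or.inl hxe
        · exact Or.inr (h2 ⟨hx, hxe⟩)
      · rintro (rfl | hxB)
        · exact ⟨he, fun h => absurd rfl h.2⟩
        · exact ⟨hBR hxB |>.1, fun _ => hxB⟩
    rwa [this]

lemma contract_indep_iff (he : e ∈ M.E) (hne : M.Indep {e}) :
    (contract M {e}).Indep I ↔ M.Indep (insert e I) ∧ e ∉ I := by
  constructor
  · intro hI
    obtain ⟨B, hB, hIB⟩ := hI.exists_isBase_superset
    rw [contract_base_iff he hne] at hB
    exact ⟨hB.1.indep.subset (insert_subset_insert hIB), fun h => hB.2 (hIB h)⟩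
  · rintro ⟨hI, heI⟩
    obtain ⟨B, hB, hIB⟩ := hI.exists_isBase_superset
    have heB : e ∈ B := hIB (mem_insert e I)
    have hB' : (contract M {e}).IsBase (B \ {e}) := by
      rw [contract_base_iff he hne]
      refine ⟨?_, fun h => h.2 rfl⟩
      rwa [insert_diff_singleton, insert_eq_of_mem heB]
    exact hB'.indep.subset fun x hx =>
      ⟨hIB (Or.inr hx), fun hxe => heI (by rwa [← hxe])⟩

lemma er_ne_top (hfin : M.E.Finite) (X : Set α) : er M X ≠ ⊤ := by
  obtain ⟨J, hJ⟩ := M.exists_isBasis' X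
  rw [er_eq_of_basis' hJ, encard_ne_top_iff]
  exact hfin.subset hJ.indep.subset_ground

lemma er_contract_eq (he : e ∈ M.E) (hne : M.Indep {e}) (hX : X ⊆ M.E \ {e}) :
    er M (insert e X) = er (contract M {e}) X + 1 := by
  obtain ⟨J, hJ⟩ := (contract M {e}).exists_isBasis' X
  have hJi := (contract_indep_iff he hne).mp hJ.indep
  have hbasis : M.IsBasis' (insert e J) (insert e X) := by
    refine ⟨⟨hJi.1, insert_subset_insert hJ.subset⟩, ?_⟩
    rintro K ⟨hKi, hKX⟩ hJK
    have heK : e ∈ K := hJK (mem_insert e J)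
    have hKe : (contract M {e}).Indep (K \ {e}) := by
      rw [contract_indep_iff he hne]
      refine ⟨by rwa [insert_diff_singleton, insert_eq_of_mem heK], fun h => h.2 rfl⟩
    have hsub : K \ {e} ⊆ J := hJ.2 ⟨hKe, fun x hx =>
      (hKX hx.1).resolve_left fun h => hx.2 h⟩
      (fun x hx => ⟨hJK (Or.inr hx), fun hxe => hJi.2 (by rwa [← hxe])⟩)
    intro x hxK
    by_cases hxe : x = e
    · exact Or.inl hxe
    · exact Or.inr (hsub ⟨hxK, hxe⟩)
  rw [er_eq_of_basis' hbasis, er_eq_of_basis' hJ,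
    encard_insert_of_notMem hJi.2]

end MatroidDHJ

theorem weaklyRound_contract {α : Type*} (M : Matroid α) (hfin : M.E.Finite)
    (hWR : WeaklyRound M) (e : α) (he : e ∈ M.E) (hne : M.Indep {e}) :
    WeaklyRound (MatroidDHJ.contract M {e}) := by
  set N := MatroidDHJ.contract M {e} with hN
  rintro ⟨A, B, hUnion, hA, hB⟩
  have hNE : N.E = M.E \ {e} := rfl
  have hNEfin : N.E.Finite := hfin.subset (hNE ▸ diff_subset)
  have hAE : A ⊆ M.E \ {e} := hNE ▸ hUnion ▸ subset_union_left
  have hBE : B ⊆ M.E \ {e} := hNE ▸ hUnion ▸ subset_union_right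
  have hinsE : insert e N.E = M.E := by
    rw [hNE, insert_diff_singleton, insert_eq_of_mem he]
  obtain ⟨a, ha⟩ := (WithTop.ne_top_iff_exists).mp (er_ne_top hNEfin A)
  obtain ⟨b, hb⟩ := (WithTop.ne_top_iff_exists).mp (er_ne_top hNEfin B)
  obtain ⟨n, hn⟩ := (WithTop.ne_top_iff_exists).mp (er_ne_top hNEfin N.E)
  have herA : er M (insert e A) = ((a + 1 : ℕ) : ℕ∞) := by
    rw [er_contract_eq he hne hAE, ← ha]; norm_cast
  have herB : er M (insert e B) = ((b + 1 : ℕ) : ℕ∞) := by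
    rw [er_contract_eq he hne hBE, ← hb]; norm_cast
  have herE : er M M.E = ((n + 1 : ℕ) : ℕ∞) := by
    rw [← hinsE, er_contract_eq he hne (hNE ▸ Subset.rfl), ← hn]; norm_cast
  have hrA : r M (insert e A) = a + 1 := by rw [r, herA, ENat.toNat_coe]
  have hrB : r M (insert e B) = b + 1 := by rw [r, herB, ENat.toNat_coe]
  have hrkM : rk M = n + 1 := by rw [rk, r, herE, ENat.toNat_coe]
  have hrNA : r N A = a := by rw [r, ← ha]; rfl
  have hrNB : r N B = b := by rw [r, ← hb]; rfl
  have hrkN : rk N = n := by rw [rk, r, ← hn]; rfl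
  rw [hrNA, hrkN] at hA
  rw [hrNB, hrkN] at hB
  exact hWR ⟨insert e A, insert e B, by
    rw [insert_union, union_insert, insert_idem, hUnion, hinsE], by
    rw [hrA, hrkM]; omega, by
    rw [hrB, hrkM]; omega⟩
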